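/- Let A and B be finite prime non-unital, non-associative k-algebras over the same unital commutative ring k. If Id(A) = Id(B), then A and B are isomorphic as k-algebras. -/

import Mathlib

universe u v w x
open Function
noncomputable section

/-- The free non-unital, non-associative `k`-algebra on the countably many
generators `x₁, x₂, …` (indexed by `ℕ`): the magma algebra over `k` of the free
magma on `ℕ`. -/
abbrev FreeAlg (k : Type u) [CommRing k] : Type u := FreeNonUnitalNonAssocAlgebra k ℕ

/-- `f` is a polynomial identity of the algebra `A`: every `k`-algebra
homomorphism from the free algebra to `A` sends `f` to `0`. -/
def IsPI (k : Type u) [CommRing k] (A : Type v) [NonUnitalNonAssocRing A] [Module k A]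
    [SMulCommClass k A A] [IsScalarTower k A A] (f : FreeAlg k) : Prop :=
  ∀ φ : FreeAlg k →ₙₐ[k] A, φ f = 0

/-- `Id(A)`: the set of all polynomial identities of `A`. -/
def Ids (k : Type u) [CommRing k] (A : Type v) [NonUnitalNonAssocRing A] [Module k A]
    [SMulCommClass k A A] [IsScalarTower k A A] : Set (FreeAlg k) :=
  {f | IsPI k A f}
/-- Number of occurrences of the variable `i` in a free-magma word. -/
def varCount : FreeMagma ℕ → ℕ → ℕ
  | FreeMagma.of x, i => if x = i then 1 else 0
  | FreeMagma.mul a b, i => varCount a i + varCount b i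

/-- `f` is multilinear in the first `m` variables `x₁, …, x_m`: it is a `k`-linear
combination of monomials in each of which every one of the first `m` variables occurs
exactly once and no other variable occurs. -/
def IsMultilinear (k : Type u) [CommRing k] (m : ℕ) (f : FreeAlg k) : Prop :=
  f ∈ Submodule.span k {w : FreeAlg k |
    ∃ u : FreeMagma ℕ, (∀ i, varCount u i = if i < m then 1 else 0) ∧
      w = FreeMagma.lift (FreeNonUnitalNonAssocAlgebra.of k) u}
/-- An ideal of the algebra `A`: a `k`-submodule `I` with `AI ⊆ I` and `IA ⊆ I`. -/
def IsIdeal (k : Type u) [CommRing k] (A : Type v) [NonUnitalNonAssocRing A] [Module k A]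
    (I : Submodule k A) : Prop :=
  ∀ a : A, ∀ x ∈ I, a * x ∈ I ∧ x * a ∈ I
/-- The product `S·T` of two subsets of `A`: the `k`-span of all values
`f(s, t, a₁, …, a_t)` of polynomials `f` multilinear in `x₁, …, x_{2+t}`,
where `s ∈ S`, `t ∈ T` and the remaining arguments run over `A`. -/
def mulSet (k : Type u) [CommRing k] (A : Type v) [NonUnitalNonAssocRing A] [Module k A]
    [SMulCommClass k A A] [IsScalarTower k A A] (S T : Set A) : Submodule k A :=
  Submodule.span k {y : A | ∃ (t : ℕ) (f : FreeAlg k), IsMultilinear k (2 + t) f ∧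
    ∃ v : ℕ → A, v 0 ∈ S ∧ v 1 ∈ T ∧ FreeNonUnitalNonAssocAlgebra.lift k v f = y}
/-- `A` is a prime algebra: `I·J ≠ 0` for all nonzero ideals `I, J` of `A`. -/
def IsPrimeAlg (k : Type u) [CommRing k] (A : Type v) [NonUnitalNonAssocRing A] [Module k A]
    [SMulCommClass k A A] [IsScalarTower k A A] : Prop :=
  ∀ I J : Submodule k A, IsIdeal k A I → IsIdeal k A J → I ≠ ⊥ → J ≠ ⊥ →
    mulSet k A (I : Set A) (J : Set A) ≠ ⊥

set_option linter.unusedSectionVars false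

open FreeNonUnitalNonAssocAlgebra

section Lemmas
variable (k : Type u) [CommRing k] (A : Type v) [NonUnitalNonAssocRing A] [Module k A]
  [SMulCommClass k A A] [IsScalarTower k A A]

lemma eval_magma (a : ℕ → A) (u : FreeMagma ℕ) :
    lift k a (FreeMagma.lift (of k) u : FreeAlg k) = FreeMagma.lift a u := by
  induction u with
  | ih1 x => simp
  | ih2 u1 u2 h1 h2 => simp [map_mul, h1, h2]

lemma magma_eval_zero (a : ℕ → A) (j : ℕ) (ha : a j = 0) :
    ∀ u : FreeMagma ℕ, 1 ≤ varCount u j → FreeMagma.lift a u = 0 := by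
  intro u
  induction u with
  | ih1 x =>
    intro h
    simp only [varCount] at h
    split at h
    · subst ‹x = j›; simpa using ha
    · omega
  | ih2 u1 u2 h1 h2 =>
    intro h
    simp only [varCount] at h
    by_cases hc : 1 ≤ varCount u1 j
    · simp [map_mul, h1 hc]
    · have : 1 ≤ varCount u2 j := by omega
      simp [map_mul, h2 this]

lemma multilinear_eval_zero {m : ℕ} {f : FreeAlg k} (hf : IsMultilinear k m f)
    (a : ℕ → A) (j : ℕ) (hj : j < m) (ha : a j = 0) : lift k a f = 0 := by
  have : Submodule.span k {w : FreeAlg k |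
      ∃ u : FreeMagma ℕ, (∀ i, varCount u i = if i < m then 1 else 0) ∧
        w = FreeMagma.lift (of k) u} ≤ LinearMap.ker (LinearMapClass.linearMap (lift k a)) := by
    rw [Submodule.span_le]
    rintro w ⟨u, hu, rfl⟩
    have : varCount u j = 1 := by rw [hu j, if_pos hj]
    simp only [SetLike.mem_coe, LinearMap.mem_ker]
    show lift k a (FreeMagma.lift (of k) u : FreeAlg k) = 0
    rw [eval_magma]
    exact magma_eval_zero A a j ha u (by omega)
  exact this hf

end Lemmas

section Key
variable (k : Type u) [CommRing k]
variable (A : Type v) [NonUnitalNonAssocRing A] [Module k A]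
  [SMulCommClass k A A] [IsScalarTower k A A]
variable (B : Type w) [NonUnitalNonAssocRing B] [Module k B]
  [SMulCommClass k B B] [IsScalarTower k B B]

/-- The evaluation homomorphism at an `n`-tuple of elements of `A`
(variables beyond `n` are sent to `0`). -/
def thetaF (n : ℕ) (vv : Fin n → A) : FreeAlg k →ₙₐ[k] A :=
  lift k (fun i => if h : i < n then vv ⟨i, h⟩ else 0)

lemma thetaF_of (n : ℕ) (vv : Fin n → A) (i : ℕ) :
    thetaF k A n vv (of k i) = if h : i < n then vv ⟨i, h⟩ else 0 :=
  lift_of_apply k _ i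

lemma key [Finite A] [Finite B] (hBp : IsPrimeAlg k B) (hPI : Ids k A ⊆ Ids k B) :
    Subsingleton B ∨ ∃ (θ : FreeAlg k →ₙₐ[k] A) (Ψ : FreeAlg k →ₙₐ[k] B),
      Surjective Ψ ∧ ∀ f, θ f = 0 → Ψ f = 0 := by
  classical
  letI := Fintype.ofFinite A
  obtain ⟨n, ⟨eqv⟩⟩ := Finite.exists_equiv_fin B
  let g : ℕ → B := fun i => if h : i < n then eqv.symm ⟨i, h⟩ else 0
  let Ψ : FreeAlg k →ₙₐ[k] B := lift k g
  have hΨof : ∀ i, Ψ (of k i) = g i := fun i => lift_of_apply k g i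
  have hΨs : Surjective Ψ := by
    intro b
    refine ⟨of k ((eqv b : Fin n) : ℕ), ?_⟩
    rw [hΨof]
    simp [g]
  have hvanish : ∀ f : FreeAlg k, (∀ vv, thetaF k A n vv f = 0) → Ψ f = 0 := by
    intro f hf
    let σ : FreeAlg k →ₙₐ[k] FreeAlg k := lift k (fun i => if i < n then of k i else 0)
    have hσof : ∀ i, σ (of k i) = if i < n then of k i else 0 :=
      fun i => lift_of_apply k _ i
    have hσA : σ f ∈ Ids k A := by
      intro φ
      have hcomp : φ.comp σ = thetaF k A n (fun j => φ (of k (j : ℕ))) := by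
        apply FreeNonUnitalNonAssocAlgebra.hom_ext
        intro i
        rw [NonUnitalAlgHom.comp_apply, hσof, thetaF_of]
        split_ifs with h
        · rfl
        · exact map_zero φ
      have h1 : φ (σ f) = thetaF k A n (fun j => φ (of k (j : ℕ))) f := by
        rw [← hcomp, NonUnitalAlgHom.comp_apply]
      rw [h1]; exact hf _
    have hσB : σ f ∈ Ids k B := hPI hσA
    have hΨσ : Ψ.comp σ = Ψ := by
      apply FreeNonUnitalNonAssocAlgebra.hom_ext
      intro i
      rw [NonUnitalAlgHom.comp_apply, hσof]
      split_ifs with h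
      · rfl
      · rw [map_zero, hΨof]
        simp [g, h]
    have h2 : Ψ (σ f) = 0 := hσB Ψ
    calc Ψ f = Ψ.comp σ f := by rw [hΨσ]
    _ = Ψ (σ f) := NonUnitalAlgHom.comp_apply _ _ _
    _ = 0 := h2
  -- submodules
  let N : Finset (Fin n → A) → Submodule k (FreeAlg k) :=
    fun S => ⨅ vv ∈ S, LinearMap.ker (LinearMapClass.linearMap (thetaF k A n vv))
  have hmemN : ∀ S f, f ∈ N S ↔ ∀ vv ∈ S, thetaF k A n vv f = 0 := by
    intro S f
    simp only [N, Submodule.mem_iInf, LinearMap.mem_ker]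
    rfl
  let K : Finset (Fin n → A) → Submodule k B :=
    fun S => Submodule.map (LinearMapClass.linearMap Ψ) (N S)
  have hmemK : ∀ S x, x ∈ K S ↔ ∃ f, (∀ vv ∈ S, thetaF k A n vv f = 0) ∧ Ψ f = x := by
    intro S x
    simp only [K, Submodule.mem_map]
    constructor
    · rintro ⟨f, hf, rfl⟩; exact ⟨f, (hmemN S f).mp hf, rfl⟩
    · rintro ⟨f, hf, rfl⟩; exact ⟨f, (hmemN S f).mpr hf, rfl⟩
  have hKuniv : K Finset.univ = ⊥ := by
    rw [Submodule.eq_bot_iff]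
    intro x hx
    obtain ⟨f, hf, rfl⟩ := (hmemK _ x).mp hx
    exact hvanish f (fun vv => hf vv (Finset.mem_univ _))
  have hIdeal : ∀ S, IsIdeal k B (K S) := by
    intro S b x hx
    obtain ⟨f, hf, rfl⟩ := (hmemK _ x).mp hx
    obtain ⟨h, rfl⟩ := hΨs b
    constructor
    · exact (hmemK _ _).mpr ⟨h * f, fun vv hvv => by rw [map_mul, hf vv hvv, mul_zero],
        map_mul Ψ h f⟩
    · exact (hmemK _ _).mpr ⟨f * h, fun vv hvv => by rw [map_mul, hf vv hvv, zero_mul],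
        map_mul Ψ f h⟩
  have hex : ∃ m : ℕ, ∃ S : Finset (Fin n → A), S.card = m ∧ K S = ⊥ :=
    ⟨Finset.univ.card, Finset.univ, rfl, hKuniv⟩
  obtain ⟨S, hScard, hSbot⟩ := Nat.find_spec hex
  have hmin : ∀ T : Finset (Fin n → A), K T = ⊥ → Nat.find hex ≤ T.card :=
    fun T hT => Nat.find_le ⟨T, rfl, hT⟩
  rcases Nat.lt_or_ge S.card 2 with hlt | hge
  · interval_cases h : S.card
    · -- S empty: B is trivial
      left
      have hSempty : S = ∅ := Finset.card_eq_zero.mp h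
      refine subsingleton_of_forall_eq 0 (fun b => ?_)
      obtain ⟨f, rfl⟩ := hΨs b
      have hm : Ψ f ∈ K S := (hmemK _ _).mpr ⟨f, fun vv hvv => by
        simp [hSempty] at hvv, rfl⟩
      rw [hSbot] at hm
      simpa using hm
    · -- S = {v}
      right
      obtain ⟨v, rfl⟩ := Finset.card_eq_one.mp h
      refine ⟨thetaF k A n v, Ψ, hΨs, fun f hf => ?_⟩
      have hm : Ψ f ∈ K {v} := (hmemK _ _).mpr ⟨f, fun vv hvv => by
        rw [Finset.mem_singleton] at hvv; rw [hvv]; exact hf, rfl⟩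
      rw [hSbot] at hm
      simpa using hm
  · -- card ≥ 2: contradiction with primeness
    exfalso
    have hSne : S.Nonempty := Finset.card_pos.mp (by omega)
    obtain ⟨v, hv⟩ := hSne
    have hS'card : (S.erase v).card = S.card - 1 := Finset.card_erase_of_mem hv
    have hKv : K {v} ≠ ⊥ := by
      intro hbot
      have := hmin _ hbot
      rw [Finset.card_singleton] at this
      omega
    have hKS' : K (S.erase v) ≠ ⊥ := by
      intro hbot
      have := hmin _ hbot
      omega
    refine hBp (K {v}) (K (S.erase v)) (hIdeal _) (hIdeal _) hKv hKS' ?_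
    rw [mulSet, Submodule.span_eq_bot]
    rintro y ⟨t, f, hf, w, hw0, hw1, rfl⟩
    rw [SetLike.mem_coe, hmemK] at hw0 hw1
    obtain ⟨p, hp, hΨp⟩ := hw0
    obtain ⟨q, hq, hΨq⟩ := hw1
    let w' : ℕ → FreeAlg k := fun j =>
      if j = 0 then p else if j = 1 then q else surjInv hΨs (w j)
    have hw'Ψ : ∀ j, Ψ (w' j) = w j := by
      intro j
      rcases Nat.eq_zero_or_pos j with rfl | hj
      · simpa [w'] using hΨp
      · rcases Nat.lt_or_ge j 2 with hj2 | hj2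
        · have : j = 1 := by omega
          subst this
          simpa [w'] using hΨq
        · have h0 : j ≠ 0 := by omega
          have h1 : j ≠ 1 := by omega
          simp only [w', if_neg h0, if_neg h1]
          exact surjInv_eq hΨs (w j)
    have hcomp : Ψ.comp (lift k w') = lift k w := by
      apply FreeNonUnitalNonAssocAlgebra.hom_ext
      intro i
      rw [NonUnitalAlgHom.comp_apply, lift_of_apply, lift_of_apply, hw'Ψ]
    have hyF : lift k w f = Ψ (lift k w' f) := by
      rw [← hcomp, NonUnitalAlgHom.comp_apply]
    have hFN : ∀ vv ∈ S, thetaF k A n vv (lift k w' f) = 0 := by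
      intro vv hvv
      have hcomp2 : (thetaF k A n vv).comp (lift k w') =
          lift k (fun i => thetaF k A n vv (w' i)) := by
        apply FreeNonUnitalNonAssocAlgebra.hom_ext
        intro i
        rw [NonUnitalAlgHom.comp_apply, lift_of_apply, lift_of_apply]
      have hFval : thetaF k A n vv (lift k w' f) =
          lift k (fun i => thetaF k A n vv (w' i)) f := by
        rw [← hcomp2, NonUnitalAlgHom.comp_apply]
      by_cases hvveq : vv = v
      · subst hvveq
        have ha0 : thetaF k A n vv (w' 0) = 0 := by
          have hw0p : w' 0 = p := by simp [w']
          rw [hw0p]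
          exact hp vv (Finset.mem_singleton_self vv)
        rw [hFval]
        exact multilinear_eval_zero k A hf _ 0 (by omega) ha0
      · have hvS' : vv ∈ S.erase v := Finset.mem_erase.mpr ⟨hvveq, hvv⟩
        have ha1 : thetaF k A n vv (w' 1) = 0 := by
          have hw1q : w' 1 = q := by simp [w']
          rw [hw1q]
          exact hq vv hvS'
        rw [hFval]
        exact multilinear_eval_zero k A hf _ 1 (by omega) ha1
    have hm : Ψ (lift k w' f) ∈ K S := (hmemK _ _).mpr ⟨lift k w' f, hFN, rfl⟩
    rw [hSbot] at hm
    rw [hyF]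
    simpa using hm

end Key

section Main
variable (k : Type u) [CommRing k]
variable (A : Type v) [NonUnitalNonAssocRing A] [Module k A]
  [SMulCommClass k A A] [IsScalarTower k A A]
variable (B : Type w) [NonUnitalNonAssocRing B] [Module k B]
  [SMulCommClass k B B] [IsScalarTower k B B]

lemma exists_surj_range (θ : FreeAlg k →ₙₐ[k] A) (Ψ : FreeAlg k →ₙₐ[k] B)
    (hΨs : Surjective Ψ) (hker : ∀ f, θ f = 0 → Ψ f = 0) :
    ∃ s : Set.range θ → B, Surjective s := by
  classical
  refine ⟨fun a => Ψ (Classical.choose a.2), ?_⟩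
  intro b
  obtain ⟨f, rfl⟩ := hΨs b
  refine ⟨⟨θ f, ⟨f, rfl⟩⟩, ?_⟩
  have hspec : θ (Classical.choose (⟨f, rfl⟩ : ∃ g, θ g = θ f)) = θ f :=
    Classical.choose_spec (⟨f, rfl⟩ : ∃ g, θ g = θ f)
  have h0 : θ (Classical.choose (⟨f, rfl⟩ : ∃ g, θ g = θ f) - f) = 0 := by
    rw [map_sub, hspec, sub_self]
  have h1 := hker _ h0
  rw [map_sub, sub_eq_zero] at h1
  exact h1

lemma card_le_of_data [Finite A] [Finite B] (θ : FreeAlg k →ₙₐ[k] A)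
    (Ψ : FreeAlg k →ₙₐ[k] B) (hΨs : Surjective Ψ) (hker : ∀ f, θ f = 0 → Ψ f = 0) :
    Nat.card B ≤ Nat.card A := by
  obtain ⟨s, hs⟩ := exists_surj_range k A B θ Ψ hΨs hker
  calc Nat.card B ≤ Nat.card (Set.range θ) := Nat.card_le_card_of_surjective s hs
  _ ≤ Nat.card A := Nat.card_le_card_of_injective _ Subtype.val_injective

lemma subsingleton_equiv [Subsingleton A] [Subsingleton B] :
    ∃ e : A ≃ₗ[k] B, ∀ x y : A, e (x * y) = e x * e y := by
  refine ⟨LinearEquiv.ofBijective (0 : A →ₗ[k] B)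
    ⟨fun x y _ => Subsingleton.elim x y, fun b => ⟨0, Subsingleton.elim _ _⟩⟩,
    fun x y => Subsingleton.elim _ _⟩

theorem prime_iso_of_same_ids' (Af : Finite A) (Bf : Finite B)
    (hA : IsPrimeAlg k A) (hB : IsPrimeAlg k B)
    (hPI : Ids k A = Ids k B) :
    ∃ e : A ≃ₗ[k] B, ∀ x y : A, e (x * y) = e x * e y := by
  classical
  have hAB : Ids k A ⊆ Ids k B := hPI ▸ Set.Subset.rfl
  have hBA : Ids k B ⊆ Ids k A := hPI ▸ Set.Subset.rfl
  have h1 := key k A B hB hAB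
  have h2 := key k B A hA hBA
  -- subsingleton transfer
  have hsubA : Subsingleton B → Subsingleton A := by
    intro hsB
    have hx0 : (of k 0 : FreeAlg k) ∈ Ids k B := fun φ => Subsingleton.elim _ _
    have hxA : (of k 0 : FreeAlg k) ∈ Ids k A := hBA hx0
    refine subsingleton_of_forall_eq 0 (fun a => ?_)
    have := hxA (lift k (fun _ => a))
    simpa [lift_of_apply] using this
  have hsubB : Subsingleton A → Subsingleton B := by
    intro hsA
    have hx0 : (of k 0 : FreeAlg k) ∈ Ids k A := fun φ => Subsingleton.elim _ _
    have hxB : (of k 0 : FreeAlg k) ∈ Ids k B := hAB hx0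
    refine subsingleton_of_forall_eq 0 (fun b => ?_)
    have := hxB (lift k (fun _ => b))
    simpa [lift_of_apply] using this
  rcases h1 with hsB | ⟨θ1, Ψ1, hs1, hk1⟩
  · haveI := hsB
    haveI := hsubA hsB
    exact subsingleton_equiv k A B
  rcases h2 with hsA | ⟨θ2, Ψ2, hs2, hk2⟩
  · haveI := hsA
    haveI := hsubB hsA
    exact subsingleton_equiv k A B
  -- cardinalities
  have c1 : Nat.card B ≤ Nat.card A := card_le_of_data k A B θ1 Ψ1 hs1 hk1
  have c2 : Nat.card A ≤ Nat.card B := card_le_of_data k B A θ2 Ψ2 hs2 hk2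
  have hcard : Nat.card A = Nat.card B := le_antisymm c2 c1
  -- θ1 is surjective
  have hθ1s : Surjective θ1 := by
    obtain ⟨s, hs⟩ := exists_surj_range k A B θ1 Ψ1 hs1 hk1
    have hle1 : Nat.card B ≤ Nat.card (Set.range θ1) := Nat.card_le_card_of_surjective s hs
    have hle2 : Nat.card (Set.range θ1) ≤ Nat.card A :=
      Nat.card_le_card_of_injective _ Subtype.val_injective
    have hruniv : Set.range θ1 = Set.univ := by
      refine Set.eq_of_subset_of_ncard_le (Set.subset_univ _) ?_ Set.finite_univ
      rw [Set.ncard_univ, ← Nat.card_coe_set_eq]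
      omega
    exact Set.range_eq_univ.mp hruniv
  -- build the linear map
  have hsurjS : Surjective (LinearMapClass.linearMap θ1) := fun a => hθ1s a
  have hkerle : LinearMap.ker (LinearMapClass.linearMap θ1) ≤ LinearMap.ker (LinearMapClass.linearMap Ψ1) := by
    intro f hf
    rw [LinearMap.mem_ker] at hf ⊢
    exact hk1 f hf
  let E := LinearMap.quotKerEquivOfSurjective (LinearMapClass.linearMap θ1) hsurjS
  let L : A →ₗ[k] B :=
    ((LinearMap.ker (LinearMapClass.linearMap θ1)).liftQ (LinearMapClass.linearMap Ψ1) hkerle).comp E.symm.toLinearMap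
  have hEmk : ∀ f, E (Submodule.Quotient.mk f) = θ1 f := by
    intro f
    simp only [E, LinearMap.quotKerEquivOfSurjective, LinearEquiv.trans_apply,
      LinearMap.quotKerEquivRange_apply_mk, LinearEquiv.ofTop_apply]
    rfl
  have hL : ∀ f, L (θ1 f) = Ψ1 f := by
    intro f
    have hmk : E.symm (θ1 f) = Submodule.Quotient.mk f := by
      apply E.injective
      rw [LinearEquiv.apply_symm_apply, hEmk]
    show ((LinearMap.ker (LinearMapClass.linearMap θ1)).liftQ (LinearMapClass.linearMap Ψ1) hkerle) (E.symm (θ1 f)) = Ψ1 f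
    rw [hmk, Submodule.liftQ_apply]
    rfl
  have hLs : Surjective L := by
    intro b
    obtain ⟨f, rfl⟩ := hs1 b
    exact ⟨θ1 f, hL f⟩
  have hLb : Bijective L := (Nat.bijective_iff_surjective_and_card L).mpr ⟨hLs, hcard⟩
  refine ⟨LinearEquiv.ofBijective L hLb, ?_⟩
  intro x y
  obtain ⟨fx, rfl⟩ := hθ1s x
  obtain ⟨fy, rfl⟩ := hθ1s y
  show L (θ1 fx * θ1 fy) = L (θ1 fx) * L (θ1 fy)
  rw [← map_mul θ1, hL, hL, hL, map_mul]

end Main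

/-- Two finite prime algebras over the same unital commutative
ring `k` with the same polynomial identities are isomorphic as `k`-algebras. -/
theorem prime_iso_of_same_ids (k : Type u) [CommRing k]
    (A : Type v) [NonUnitalNonAssocRing A] [Module k A] [SMulCommClass k A A]
    [IsScalarTower k A A] [Finite A]
    (B : Type w) [NonUnitalNonAssocRing B] [Module k B] [SMulCommClass k B B]
    [IsScalarTower k B B] [Finite B]
    (hA : IsPrimeAlg k A) (hB : IsPrimeAlg k B)
    (hPI : Ids k A = Ids k B) :
    ∃ e : A ≃ₗ[k] B, ∀ x y : A, e (x * y) = e x * e y := by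
  exact prime_iso_of_same_ids' k A B ‹Finite A› ‹Finite B› hA hB hPI
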